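/- arXiv:1909.00420 — 4 statements merged into one kernel-verified Lean document; each statement's English description precedes it below -/
import Mathlib

section
/- Let g ≥ 1 and fix a sign ε ∈ {+1, −1}. Let O consist of pairwise distinct symbols e_1, …, e_g, e_{g+1}, ē_1, h¹, e² with class map cl(e_i) = u_i for 1 ≤ i ≤ g, cl(e_{g+1}) = cl(h¹) = w, cl(ē_1) = ε·v_1, and cl(e²) = w − ε·v_1. Suppose S⁺ ⊆ {e_1, …, e_{g+1}} and S⁻ ⊆ {e_1, …, e_{g+1}, ē_1, h¹, e²} are both nonempty and cl(S⁺) = cl(S⁻). Then one of the following holds: (i) S⁻ = S⁺; (ii) e_{g+1} ∈ S⁺ and S⁻ = (S⁺ ∖ {e_{g+1}}) ∪ {h¹}; (iii) e_{g+1} ∈ S⁺ and S⁻ = (S⁺ ∖ {e_{g+1}}) ∪ {ē_1, e²}; or (iv) S⁺ = {e_{g+1}} and S⁻ = {e_1, …, e_g} ∪ X, where X is one of {e_{g+1}, h¹}, {e_{g+1}, ē_1, e²}, {h¹, ē_1, e²}. -/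
open Finset

private lemma aux_iff {P Q : Prop} [Decidable P] [Decidable Q]
    (h : (if P then (1:ℤ) else 0) = (if Q then (1:ℤ) else 0)) : P ↔ Q := by
  by_cases hP : P <;> by_cases hQ : Q <;> simp [hP, hQ] at h ⊢

private lemma aux_succ {P Q : Prop} [Decidable P] [Decidable Q]
    (h : (if P then (1:ℤ) else 0) = (if Q then (1:ℤ) else 0) + 1) : P ∧ ¬Q := by
  by_cases hP : P <;> by_cases hQ : Q <;> simp [hP, hQ] at h ⊢

private lemma aux_pred {P Q : Prop} [Decidable P] [Decidable Q]
    (h : (if P then (1:ℤ) else 0) = (if Q then (1:ℤ) else 0) - 1) : ¬P ∧ Q := by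
  by_cases hP : P <;> by_cases hQ : Q <;> simp [hP, hQ] at h ⊢

private lemma aux_ne {P Q : Prop} [Decidable P] [Decidable Q] {c : ℤ}
    (h : (if P then (1:ℤ) else 0) = (if Q then (1:ℤ) else 0) + c) (hc : 2 ≤ c ∨ c ≤ -2) :
    False := by
  by_cases hP : P <;> by_cases hQ : Q <;> simp [hP, hQ] at h <;> omega


/-- the complete homological classification in the handle
`N¹_1` (ε = +1) or `(N²_1)'` (ε = −1): the Reeb orbits are formal symbols
`e 1, …, e g, e (g+1), ebar, h1, e2` with the indicated classes, and any
nonempty `S⁺ ⊆ {e 1, …, e (g+1)}`, `S⁻ ⊆ O` with equal total class fall into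
one of four cases. -/
theorem splitting_homological_classification (g : ℕ) (hg : 1 ≤ g)
    (ε : ℤ) (hε : ε = 1 ∨ ε = -1)
    (u v : ℕ → (ℕ → ℤ) × (ℕ → ℤ))
    (hu : ∀ i, u i = (Pi.single i 1, 0))
    (hv : ∀ i, v i = (0, Pi.single i 1))
    (w : (ℕ → ℤ) × (ℕ → ℤ))
    (hw : w = -∑ i ∈ Icc 1 g, u i)
    (O : Type) [DecidableEq O]
    (e : ℕ → O) (ebar h1 e2 : O)
    (he : Set.InjOn e (Set.Icc 1 (g+1)))
    (hd1 : ∀ i ∈ Icc 1 (g+1), e i ≠ ebar ∧ e i ≠ h1 ∧ e i ≠ e2)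
    (hd2 : ebar ≠ h1) (hd3 : ebar ≠ e2) (hd4 : h1 ≠ e2)
    (cl : O → (ℕ → ℤ) × (ℕ → ℤ))
    (hcle : ∀ i ∈ Icc 1 g, cl (e i) = u i)
    (hcltop : cl (e (g+1)) = w)
    (hclh1 : cl h1 = w)
    (hclbar : cl ebar = ε • v 1)
    (hcle2 : cl e2 = w - ε • v 1)
    (Sp Sm : Finset O)
    (hSp : Sp ⊆ (Icc 1 (g+1)).image e)
    (hSm : Sm ⊆ insert ebar (insert h1 (insert e2 ((Icc 1 (g+1)).image e))))
    (hSpne : Sp.Nonempty) (hSmne : Sm.Nonempty)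
    (hcl : ∑ o ∈ Sp, cl o = ∑ o ∈ Sm, cl o) :
    Sm = Sp
    ∨ (e (g+1) ∈ Sp ∧ Sm = insert h1 (Sp.erase (e (g+1))))
    ∨ (e (g+1) ∈ Sp ∧ Sm = insert ebar (insert e2 (Sp.erase (e (g+1)))))
    ∨ (Sp = {e (g+1)} ∧
        (Sm = (Icc 1 g).image e ∪ {e (g+1), h1}
         ∨ Sm = (Icc 1 g).image e ∪ {e (g+1), ebar, e2}
         ∨ Sm = (Icc 1 g).image e ∪ {h1, ebar, e2})) := by
  have hinj : ∀ x ∈ Icc 1 (g+1), ∀ y ∈ Icc 1 (g+1), e x = e y → x = y := by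
    intro x hx y hy hxy
    exact he (Set.mem_Icc.mpr (mem_Icc.mp hx)) (Set.mem_Icc.mpr (mem_Icc.mp hy)) hxy
  have hsub : ∀ (S T : Finset O), S ⊆ T → ∑ o ∈ S, cl o = ∑ o ∈ T, if o ∈ S then cl o else 0 := by
    intro S T hST
    rw [Finset.sum_ite_mem, Finset.inter_eq_right.mpr hST]
  have hSpSum : ∑ o ∈ Sp, cl o = ∑ i ∈ Icc 1 (g+1), if e i ∈ Sp then cl (e i) else 0 := by
    rw [hsub Sp _ hSp, Finset.sum_image hinj]
  have hb1 : ebar ∉ insert h1 (insert e2 ((Icc 1 (g+1)).image e)) := by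
    simp only [Finset.mem_insert, Finset.mem_image, not_or, not_exists]
    refine ⟨hd2, hd3, ?_⟩
    intro i
    by_cases hi : i ∈ Icc 1 (g+1)
    · simp [(hd1 i hi).1]
    · simp [hi]
  have hb2 : h1 ∉ insert e2 ((Icc 1 (g+1)).image e) := by
    simp only [Finset.mem_insert, Finset.mem_image, not_or, not_exists]
    refine ⟨hd4, ?_⟩
    intro i
    by_cases hi : i ∈ Icc 1 (g+1)
    · simp [(hd1 i hi).2.1]
    · simp [hi]
  have hb3 : e2 ∉ (Icc 1 (g+1)).image e := by
    simp only [Finset.mem_image, not_exists]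
    intro i
    by_cases hi : i ∈ Icc 1 (g+1)
    · simp [(hd1 i hi).2.2]
    · simp [hi]
  have hSmSum : ∑ o ∈ Sm, cl o
      = (if ebar ∈ Sm then cl ebar else 0) + ((if h1 ∈ Sm then cl h1 else 0)
        + ((if e2 ∈ Sm then cl e2 else 0)
          + ∑ i ∈ Icc 1 (g+1), if e i ∈ Sm then cl (e i) else 0)) := by
    rw [hsub Sm _ hSm, Finset.sum_insert hb1, Finset.sum_insert hb2, Finset.sum_insert hb3,
      Finset.sum_image hinj]
  have hE : (if ebar ∈ Sm then cl ebar else 0) + ((if h1 ∈ Sm then cl h1 else 0)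
        + ((if e2 ∈ Sm then cl e2 else 0)
          + ∑ i ∈ Icc 1 (g+1), if e i ∈ Sm then cl (e i) else 0))
      = ∑ i ∈ Icc 1 (g+1), if e i ∈ Sp then cl (e i) else 0 := by
    rw [← hSmSum, ← hcl, hSpSum]
  have hsplit : Icc 1 (g+1) = insert (g+1) (Icc 1 g) := by ext i; simp [mem_Icc]; omega
  have hg1 : (g+1) ∉ Icc 1 g := by simp [mem_Icc]
  rw [hsplit, Finset.sum_insert hg1, Finset.sum_insert hg1] at hE
  -- component lemmas
  have hw1 : ∀ j ∈ Icc 1 g, w.1 j = -1 := by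
    intro j hj
    simp [hw, hu, Prod.fst_sum, Pi.neg_apply, Finset.sum_apply, Pi.single_apply,
      Finset.sum_ite_eq, hj]
  have hw2 : ∀ k, w.2 k = 0 := by
    intro k
    simp [hw, hu, Prod.snd_sum, Pi.neg_apply, Finset.sum_apply]
  have key1 : ∀ j ∈ Icc 1 g,
      (if h1 ∈ Sm then (-1:ℤ) else 0) + ((if e2 ∈ Sm then (-1:ℤ) else 0)
        + ((if e (g+1) ∈ Sm then (-1:ℤ) else 0) + (if e j ∈ Sm then (1:ℤ) else 0)))
      = (if e (g+1) ∈ Sp then (-1:ℤ) else 0) + (if e j ∈ Sp then (1:ℤ) else 0) := by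
    intro j hj
    have hj' := mem_Icc.mp hj
    have h := congrArg (fun p : (ℕ → ℤ) × (ℕ → ℤ) => p.1 j) hE
    simp only [Prod.fst_add, Pi.add_apply, apply_ite (fun p : (ℕ → ℤ) × (ℕ → ℤ) => p.1 j),
      Prod.fst_zero, Pi.zero_apply, Prod.fst_sum, Finset.sum_apply, hcltop, hclh1, hclbar,
      hcle2, hv, Prod.smul_fst, Prod.fst_sub, Pi.sub_apply, Pi.smul_apply, smul_eq_mul,
      Prod.smul_snd] at h
    simp only [hw1 j hj] at h
    have hsum : ∀ (S : Finset O),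
        ∑ i ∈ Icc 1 g, (if e i ∈ S then (cl (e i)).1 j else 0)
          = if e j ∈ S then (1:ℤ) else 0 := by
      intro S
      rw [Finset.sum_eq_single_of_mem j hj]
      · rw [hcle j hj, hu]
        simp [Pi.single_apply]
      · intro b hb hbj
        rw [hcle b hb, hu]
        simp [Pi.single_apply, hbj]
    rw [hsum Sm, hsum Sp] at h
    simp only [Prod.fst_zero, Pi.zero_apply, smul_zero, mul_zero] at h
    split_ifs at h ⊢ <;> omega
  have hBiff : (ebar ∈ Sm ↔ e2 ∈ Sm) := by
    have h := congrArg (fun p : (ℕ → ℤ) × (ℕ → ℤ) => p.2 1) hE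
    simp only [Prod.snd_add, Pi.add_apply, apply_ite (fun p : (ℕ → ℤ) × (ℕ → ℤ) => p.2 1),
      Prod.snd_zero, Pi.zero_apply, Prod.snd_sum, Finset.sum_apply, hcltop, hclh1, hclbar,
      hcle2, hv, Prod.smul_snd, Prod.snd_sub, Pi.sub_apply, Pi.smul_apply, smul_eq_mul] at h
    simp only [hw2] at h
    have hsum : ∀ (S : Finset O),
        ∑ i ∈ Icc 1 g, (if e i ∈ S then (cl (e i)).2 1 else 0) = 0 := by
      intro S
      refine Finset.sum_eq_zero ?_
      intro i hi
      rw [hcle i hi, hu]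
      simp
    rw [hsum Sm, hsum Sp] at h
    simp only [Pi.single_apply, if_pos rfl] at h
    simp only [ite_self] at h
    rcases hε with rfl | rfl <;>
      by_cases hB : ebar ∈ Sm <;> by_cases hT' : e2 ∈ Sm
    · exact iff_of_true hB hT'
    · exfalso; norm_num [hB, hT'] at h
    · exfalso; norm_num [hB, hT'] at h
    · exact iff_of_false hB hT'
    · exact iff_of_true hB hT'
    · exfalso; norm_num [hB, hT'] at h
    · exfalso; norm_num [hB, hT'] at h
    · exact iff_of_false hB hT'
  -- convenience facts
  have hd1' : ∀ i, 1 ≤ i → i ≤ g + 1 → e i ≠ ebar ∧ e i ≠ h1 ∧ e i ≠ e2 :=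
    fun i a b => hd1 i (mem_Icc.mpr ⟨a, b⟩)
  have hmemSm : ∀ x ∈ Sm, x = ebar ∨ x = h1 ∨ x = e2 ∨ ∃ i, (1 ≤ i ∧ i ≤ g + 1) ∧ e i = x := by
    intro x hx
    have := hSm hx
    simpa [Finset.mem_insert, Finset.mem_image, mem_Icc] using this
  have hmemSp : ∀ x ∈ Sp, ∃ i, (1 ≤ i ∧ i ≤ g + 1) ∧ e i = x := by
    intro x hx
    simpa [Finset.mem_image, mem_Icc] using hSp hx
  have h1g : (1:ℕ) ≤ g := hg
  have hSpSingle : (∀ j, 1 ≤ j → j ≤ g → e j ∉ Sp) → e (g+1) ∈ Sp → Sp = {e (g+1)} := by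
    intro hA hPg
    ext x
    simp only [Finset.mem_singleton]
    constructor
    · intro hx
      rcases hmemSp x hx with ⟨i, ⟨a, b⟩, rfl⟩
      rcases eq_or_ne i (g+1) with rfl | hne
      · rfl
      · exact absurd hx (hA i a (by omega))
    · rintro rfl
      exact hPg
  by_cases hPg : e (g+1) ∈ Sp <;> by_cases hH : h1 ∈ Sm <;>
    by_cases hT : e2 ∈ Sm <;> by_cases hQg : e (g+1) ∈ Sm
  -- branch 1 : (T,T,T,T) : contradiction
  · exfalso
    have hk := key1 1 (mem_Icc.mpr ⟨le_refl 1, h1g⟩)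
    simp only [if_pos hH, if_pos hT, if_pos hQg, if_pos hPg] at hk
    exact aux_ne (P := e 1 ∈ Sm) (Q := e 1 ∈ Sp) (c := 2) (by linarith) (by norm_num)
  -- branch 2 : (T,T,T,F) : case iv, X = {h1, ebar, e2}
  · have hAB : ∀ j, 1 ≤ j → j ≤ g → e j ∈ Sm ∧ e j ∉ Sp := by
      intro j a b
      have hk := key1 j (mem_Icc.mpr ⟨a, b⟩)
      simp only [if_pos hH, if_pos hT, if_neg hQg, if_pos hPg] at hk
      exact aux_succ (by linarith)
    refine Or.inr (Or.inr (Or.inr ⟨hSpSingle (fun j a b => (hAB j a b).2) hPg,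
      Or.inr (Or.inr ?_)⟩))
    ext x
    simp only [Finset.mem_union, Finset.mem_image, Finset.mem_insert, Finset.mem_singleton,
      mem_Icc]
    constructor
    · intro hx
      rcases hmemSm x hx with rfl | rfl | rfl | ⟨i, ⟨a, b⟩, rfl⟩
      · exact Or.inr (Or.inr (Or.inl rfl))
      · exact Or.inr (Or.inl rfl)
      · exact Or.inr (Or.inr (Or.inr rfl))
      · rcases eq_or_ne i (g+1) with rfl | hne
        · exact absurd hx hQg
        · exact Or.inl ⟨i, ⟨a, by omega⟩, rfl⟩
    · intro hx
      rcases hx with ⟨i, ⟨a, b⟩, rfl⟩ | rfl | rfl | rfl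
      · exact (hAB i a b).1
      · exact hH
      · exact hBiff.mpr hT
      · exact hT
  -- branch 3 : (T,T,F,T) : case iv, X = {e (g+1), h1}
  · have hAB : ∀ j, 1 ≤ j → j ≤ g → e j ∈ Sm ∧ e j ∉ Sp := by
      intro j a b
      have hk := key1 j (mem_Icc.mpr ⟨a, b⟩)
      simp only [if_pos hH, if_neg hT, if_pos hQg, if_pos hPg] at hk
      exact aux_succ (by linarith)
    refine Or.inr (Or.inr (Or.inr ⟨hSpSingle (fun j a b => (hAB j a b).2) hPg, Or.inl ?_⟩))
    ext x
    simp only [Finset.mem_union, Finset.mem_image, Finset.mem_insert, Finset.mem_singleton,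
      mem_Icc]
    constructor
    · intro hx
      rcases hmemSm x hx with rfl | rfl | rfl | ⟨i, ⟨a, b⟩, rfl⟩
      · exact absurd (hBiff.mp hx) hT
      · exact Or.inr (Or.inr rfl)
      · exact absurd hx hT
      · rcases eq_or_ne i (g+1) with rfl | hne
        · exact Or.inr (Or.inl rfl)
        · exact Or.inl ⟨i, ⟨a, by omega⟩, rfl⟩
    · intro hx
      rcases hx with ⟨i, ⟨a, b⟩, rfl⟩ | rfl | rfl
      · exact (hAB i a b).1
      · exact hQg
      · exact hH
  -- branch 4 : (T,T,F,F) : case ii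
  · have hiff : ∀ j, 1 ≤ j → j ≤ g → (e j ∈ Sm ↔ e j ∈ Sp) := by
      intro j a b
      have hk := key1 j (mem_Icc.mpr ⟨a, b⟩)
      simp only [if_pos hH, if_neg hT, if_neg hQg, if_pos hPg] at hk
      exact aux_iff (by linarith)
    refine Or.inr (Or.inl ⟨hPg, ?_⟩)
    ext x
    simp only [Finset.mem_insert, Finset.mem_erase]
    constructor
    · intro hx
      rcases hmemSm x hx with rfl | rfl | rfl | ⟨i, ⟨a, b⟩, rfl⟩
      · exact absurd (hBiff.mp hx) hT
      · exact Or.inl rfl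
      · exact absurd hx hT
      · rcases eq_or_ne i (g+1) with rfl | hne
        · exact absurd hx hQg
        · refine Or.inr ⟨?_, (hiff i a (by omega)).mp hx⟩
          intro hcon
          exact hne (hinj i (mem_Icc.mpr ⟨a, b⟩) (g+1) (mem_Icc.mpr ⟨by omega, le_refl _⟩) hcon)
    · intro hx
      rcases hx with rfl | ⟨hxne, hxSp⟩
      · exact hH
      · rcases hmemSp x hxSp with ⟨i, ⟨a, b⟩, rfl⟩
        rcases eq_or_ne i (g+1) with rfl | hne
        · exact absurd rfl hxne
        · exact (hiff i a (by omega)).mpr hxSp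
  -- branch 5 : (T,F,T,T) : case iv, X = {e (g+1), ebar, e2}
  · have hAB : ∀ j, 1 ≤ j → j ≤ g → e j ∈ Sm ∧ e j ∉ Sp := by
      intro j a b
      have hk := key1 j (mem_Icc.mpr ⟨a, b⟩)
      simp only [if_neg hH, if_pos hT, if_pos hQg, if_pos hPg] at hk
      exact aux_succ (by linarith)
    refine Or.inr (Or.inr (Or.inr ⟨hSpSingle (fun j a b => (hAB j a b).2) hPg,
      Or.inr (Or.inl ?_)⟩))
    ext x
    simp only [Finset.mem_union, Finset.mem_image, Finset.mem_insert, Finset.mem_singleton,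
      mem_Icc]
    constructor
    · intro hx
      rcases hmemSm x hx with rfl | rfl | rfl | ⟨i, ⟨a, b⟩, rfl⟩
      · exact Or.inr (Or.inr (Or.inl rfl))
      · exact absurd hx hH
      · exact Or.inr (Or.inr (Or.inr rfl))
      · rcases eq_or_ne i (g+1) with rfl | hne
        · exact Or.inr (Or.inl rfl)
        · exact Or.inl ⟨i, ⟨a, by omega⟩, rfl⟩
    · intro hx
      rcases hx with ⟨i, ⟨a, b⟩, rfl⟩ | rfl | rfl | rfl
      · exact (hAB i a b).1
      · exact hQg
      · exact hBiff.mpr hT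
      · exact hT
  -- branch 6 : (T,F,T,F) : case iii
  · have hiff : ∀ j, 1 ≤ j → j ≤ g → (e j ∈ Sm ↔ e j ∈ Sp) := by
      intro j a b
      have hk := key1 j (mem_Icc.mpr ⟨a, b⟩)
      simp only [if_neg hH, if_pos hT, if_neg hQg, if_pos hPg] at hk
      exact aux_iff (by linarith)
    refine Or.inr (Or.inr (Or.inl ⟨hPg, ?_⟩))
    ext x
    simp only [Finset.mem_insert, Finset.mem_erase]
    constructor
    · intro hx
      rcases hmemSm x hx with rfl | rfl | rfl | ⟨i, ⟨a, b⟩, rfl⟩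
      · exact Or.inl rfl
      · exact absurd hx hH
      · exact Or.inr (Or.inl rfl)
      · rcases eq_or_ne i (g+1) with rfl | hne
        · exact absurd hx hQg
        · refine Or.inr (Or.inr ⟨?_, (hiff i a (by omega)).mp hx⟩)
          intro hcon
          exact hne (hinj i (mem_Icc.mpr ⟨a, b⟩) (g+1) (mem_Icc.mpr ⟨by omega, le_refl _⟩) hcon)
    · intro hx
      rcases hx with rfl | rfl | ⟨hxne, hxSp⟩
      · exact hBiff.mpr hT
      · exact hT
      · rcases hmemSp x hxSp with ⟨i, ⟨a, b⟩, rfl⟩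
        rcases eq_or_ne i (g+1) with rfl | hne
        · exact absurd rfl hxne
        · exact (hiff i a (by omega)).mpr hxSp
  -- branch 7 : (T,F,F,T) : case i
  · have hiff : ∀ j, 1 ≤ j → j ≤ g → (e j ∈ Sm ↔ e j ∈ Sp) := by
      intro j a b
      have hk := key1 j (mem_Icc.mpr ⟨a, b⟩)
      simp only [if_neg hH, if_neg hT, if_pos hQg, if_pos hPg] at hk
      exact aux_iff (by linarith)
    refine Or.inl ?_
    ext x
    constructor
    · intro hx
      rcases hmemSm x hx with rfl | rfl | rfl | ⟨i, ⟨a, b⟩, rfl⟩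
      · exact absurd (hBiff.mp hx) hT
      · exact absurd hx hH
      · exact absurd hx hT
      · rcases eq_or_ne i (g+1) with rfl | hne
        · exact hPg
        · exact (hiff i a (by omega)).mp hx
    · intro hx
      rcases hmemSp x hx with ⟨i, ⟨a, b⟩, rfl⟩
      rcases eq_or_ne i (g+1) with rfl | hne
      · exact hQg
      · exact (hiff i a (by omega)).mpr hx
  -- branch 8 : (T,F,F,F) : contradiction (Sm would be empty)
  · exfalso
    have hAB : ∀ j, 1 ≤ j → j ≤ g → e j ∉ Sm ∧ e j ∈ Sp := by
      intro j a b
      have hk := key1 j (mem_Icc.mpr ⟨a, b⟩)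
      simp only [if_neg hH, if_neg hT, if_neg hQg, if_pos hPg] at hk
      exact aux_pred (by linarith)
    obtain ⟨x, hx⟩ := hSmne
    rcases hmemSm x hx with rfl | rfl | rfl | ⟨i, ⟨a, b⟩, rfl⟩
    · exact hT (hBiff.mp hx)
    · exact hH hx
    · exact hT hx
    · rcases eq_or_ne i (g+1) with rfl | hne
      · exact hQg hx
      · exact (hAB i a (by omega)).1 hx
  -- branch 9 : (F,T,T,T) : contradiction
  · exfalso
    have hk := key1 1 (mem_Icc.mpr ⟨le_refl 1, h1g⟩)
    simp only [if_pos hH, if_pos hT, if_pos hQg, if_neg hPg] at hk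
    exact aux_ne (P := e 1 ∈ Sm) (Q := e 1 ∈ Sp) (c := 3) (by linarith) (by norm_num)
  -- branch 10 : (F,T,T,F) : contradiction
  · exfalso
    have hk := key1 1 (mem_Icc.mpr ⟨le_refl 1, h1g⟩)
    simp only [if_pos hH, if_pos hT, if_neg hQg, if_neg hPg] at hk
    exact aux_ne (P := e 1 ∈ Sm) (Q := e 1 ∈ Sp) (c := 2) (by linarith) (by norm_num)
  -- branch 11 : (F,T,F,T) : contradiction
  · exfalso
    have hk := key1 1 (mem_Icc.mpr ⟨le_refl 1, h1g⟩)
    simp only [if_pos hH, if_neg hT, if_pos hQg, if_neg hPg] at hk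
    exact aux_ne (P := e 1 ∈ Sm) (Q := e 1 ∈ Sp) (c := 2) (by linarith) (by norm_num)
  -- branch 12 : (F,T,F,F) : contradiction (Sp would be empty)
  · exfalso
    have hAB : ∀ j, 1 ≤ j → j ≤ g → e j ∈ Sm ∧ e j ∉ Sp := by
      intro j a b
      have hk := key1 j (mem_Icc.mpr ⟨a, b⟩)
      simp only [if_pos hH, if_neg hT, if_neg hQg, if_neg hPg] at hk
      exact aux_succ (by linarith)
    obtain ⟨x, hx⟩ := hSpne
    rcases hmemSp x hx with ⟨i, ⟨a, b⟩, rfl⟩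
    rcases eq_or_ne i (g+1) with rfl | hne
    · exact hPg hx
    · exact (hAB i a (by omega)).2 hx
  -- branch 13 : (F,F,T,T) : contradiction
  · exfalso
    have hk := key1 1 (mem_Icc.mpr ⟨le_refl 1, h1g⟩)
    simp only [if_neg hH, if_pos hT, if_pos hQg, if_neg hPg] at hk
    exact aux_ne (P := e 1 ∈ Sm) (Q := e 1 ∈ Sp) (c := 2) (by linarith) (by norm_num)
  -- branch 14 : (F,F,T,F) : contradiction (Sp would be empty)
  · exfalso
    have hAB : ∀ j, 1 ≤ j → j ≤ g → e j ∈ Sm ∧ e j ∉ Sp := by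
      intro j a b
      have hk := key1 j (mem_Icc.mpr ⟨a, b⟩)
      simp only [if_neg hH, if_pos hT, if_neg hQg, if_neg hPg] at hk
      exact aux_succ (by linarith)
    obtain ⟨x, hx⟩ := hSpne
    rcases hmemSp x hx with ⟨i, ⟨a, b⟩, rfl⟩
    rcases eq_or_ne i (g+1) with rfl | hne
    · exact hPg hx
    · exact (hAB i a (by omega)).2 hx
  -- branch 15 : (F,F,F,T) : contradiction (Sp would be empty)
  · exfalso
    have hAB : ∀ j, 1 ≤ j → j ≤ g → e j ∈ Sm ∧ e j ∉ Sp := by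
      intro j a b
      have hk := key1 j (mem_Icc.mpr ⟨a, b⟩)
      simp only [if_neg hH, if_neg hT, if_pos hQg, if_neg hPg] at hk
      exact aux_succ (by linarith)
    obtain ⟨x, hx⟩ := hSpne
    rcases hmemSp x hx with ⟨i, ⟨a, b⟩, rfl⟩
    rcases eq_or_ne i (g+1) with rfl | hne
    · exact hPg hx
    · exact (hAB i a (by omega)).2 hx
  -- branch 16 : (F,F,F,F) : case i
  · have hiff : ∀ j, 1 ≤ j → j ≤ g → (e j ∈ Sm ↔ e j ∈ Sp) := by
      intro j a b
      have hk := key1 j (mem_Icc.mpr ⟨a, b⟩)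
      simp only [if_neg hH, if_neg hT, if_neg hQg, if_neg hPg] at hk
      exact aux_iff (by linarith)
    refine Or.inl ?_
    ext x
    constructor
    · intro hx
      rcases hmemSm x hx with rfl | rfl | rfl | ⟨i, ⟨a, b⟩, rfl⟩
      · exact absurd (hBiff.mp hx) hT
      · exact absurd hx hH
      · exact absurd hx hT
      · rcases eq_or_ne i (g+1) with rfl | hne
        · exact absurd hx hQg
        · exact (hiff i a (by omega)).mp hx
    · intro hx
      rcases hmemSp x hx with ⟨i, ⟨a, b⟩, rfl⟩
      rcases eq_or_ne i (g+1) with rfl | hne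
      · exact absurd hx hPg
      · exact (hiff i a (by omega)).mpr hx
end

section
/- Let g ≥ 1 and fix a sign ε ∈ {+1, −1}. Let O consist of pairwise distinct symbols e_1, …, e_g, e_{g+1}, ē_1, h¹, e² with class map cl(e_i) = u_i for 1 ≤ i ≤ g, cl(e_{g+1}) = cl(h¹) = w, cl(ē_1) = ε·v_1, and cl(e²) = w − ε·v_1, and let A : O → ℝ_{>0} be an action map satisfying A(e_1) = ⋯ = A(e_g) = A(e_{g+1}) = a, A(h¹) < a, and a < A(ē_1), a < A(e²). Suppose S⁺ ⊆ {e_1, …, e_{g+1}} and S⁻ ⊆ {e_1, …, e_{g+1}, ē_1, h¹, e²} are both nonempty, cl(S⁺) = cl(S⁻), and A(S⁻) < A(S⁺). Then e_{g+1} ∈ S⁺ and S⁻ = (S⁺ ∖ {e_{g+1}}) ∪ {h¹}. -/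
open Finset

private lemma aux_sum_image {O : Type} {M : Type*} [DecidableEq O] [AddCommMonoid M]
    (e : ℕ → O) (s : Finset ℕ) (he : Set.InjOn e ↑s)
    (S : Finset O) (hS : S ⊆ s.image e) (f : O → M) :
    ∑ o ∈ S, f o = ∑ i ∈ s.filter (fun i => e i ∈ S), f (e i) := by
  have h1 : S = (s.filter (fun i => e i ∈ S)).image e := by
    ext o
    simp only [Finset.mem_image, Finset.mem_filter]
    constructor
    · intro ho
      obtain ⟨i, hi, rfl⟩ := Finset.mem_image.mp (hS ho)
      exact ⟨i, ⟨hi, ho⟩, rfl⟩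
    · rintro ⟨i, ⟨hi, hio⟩, rfl⟩; exact hio
  conv_lhs => rw [h1]
  rw [Finset.sum_image]
  intro x hx y hy hxy
  exact he (Finset.mem_coe.mpr (Finset.filter_subset _ _ hx))
    (Finset.mem_coe.mpr (Finset.filter_subset _ _ hy)) hxy

private lemma aux_split_top {M : Type*} [AddCommMonoid M] (g : ℕ)
    (p : ℕ → Prop) [DecidablePred p] (f : ℕ → M) :
    ∑ i ∈ (Finset.Icc 1 (g+1)).filter p, f i
      = (if p (g+1) then f (g+1) else 0) + ∑ i ∈ (Finset.Icc 1 g).filter p, f i := by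
  have h : Finset.Icc 1 (g+1) = insert (g+1) (Finset.Icc 1 g) := by
    ext i; simp only [Finset.mem_Icc, Finset.mem_insert]; omega
  rw [h, Finset.filter_insert]
  split_ifs with hp
  · rw [Finset.sum_insert (by simp [Finset.mem_filter, Finset.mem_Icc])]
  · rw [zero_add]

private lemma aux_sum_three {O : Type} {M : Type*} [DecidableEq O] [AddCommMonoid M]
    (S T : Finset O) (x y z : O)
    (hS : S ⊆ insert x (insert y (insert z T)))
    (hx : x ∉ T) (hy : y ∉ T) (hz : z ∉ T)
    (hxy : x ≠ y) (hxz : x ≠ z) (hyz : y ≠ z) (f : O → M) :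
    ∑ o ∈ S, f o = (if x ∈ S then f x else 0) + (if y ∈ S then f y else 0)
      + (if z ∈ S then f z else 0) + ∑ o ∈ S.filter (fun o => o ∈ T), f o := by
  rw [← Finset.sum_filter_add_sum_filter_not S (fun o => o ∈ T)]
  have h1 : S.filter (fun o => o ∉ T) = ({x, y, z} : Finset O).filter (fun o => o ∈ S) := by
    ext o
    simp only [Finset.mem_filter, Finset.mem_insert, Finset.mem_singleton]
    constructor
    · rintro ⟨hoS, hoT⟩
      have := hS hoS
      simp only [Finset.mem_insert] at this
      rcases this with rfl | rfl | rfl | h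
      · exact ⟨Or.inl rfl, hoS⟩
      · exact ⟨Or.inr (Or.inl rfl), hoS⟩
      · exact ⟨Or.inr (Or.inr rfl), hoS⟩
      · exact absurd h hoT
    · rintro ⟨h, hoS⟩
      refine ⟨hoS, ?_⟩
      rcases h with rfl | rfl | rfl
      exacts [hx, hy, hz]
  have h2 : ∑ o ∈ ({x, y, z} : Finset O).filter (fun o => o ∈ S), f o
      = (if x ∈ S then f x else 0) + (if y ∈ S then f y else 0)
        + (if z ∈ S then f z else 0) := by
    rw [Finset.sum_filter, Finset.sum_insert (by simp [hxy, hxz]),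
      Finset.sum_insert (by simp [hyz]), Finset.sum_singleton, add_assoc]
  rw [h1, h2]
  abel

private lemma sum_Sp {O : Type} {M : Type*} [DecidableEq O] [AddCommMonoid M]
    (g : ℕ) (e : ℕ → O) (he : Set.InjOn e (Set.Icc 1 (g+1)))
    (S : Finset O) (hS : S ⊆ (Icc 1 (g+1)).image e) (f : O → M) :
    ∑ o ∈ S, f o = (if e (g+1) ∈ S then f (e (g+1)) else 0)
      + ∑ i ∈ (Icc 1 g).filter (fun i => e i ∈ S), f (e i) := by
  rw [aux_sum_image e (Icc 1 (g+1)) (by rwa [coe_Icc]) S hS f, aux_split_top]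

private lemma sum_Sm {O : Type} {M : Type*} [DecidableEq O] [AddCommMonoid M]
    (g : ℕ) (e : ℕ → O) (ebar h1 e2 : O)
    (he : Set.InjOn e (Set.Icc 1 (g+1)))
    (hd1 : ∀ i ∈ Icc 1 (g+1), e i ≠ ebar ∧ e i ≠ h1 ∧ e i ≠ e2)
    (hd2 : ebar ≠ h1) (hd3 : ebar ≠ e2) (hd4 : h1 ≠ e2)
    (S : Finset O)
    (hS : S ⊆ insert ebar (insert h1 (insert e2 ((Icc 1 (g+1)).image e))))
    (f : O → M) :
    ∑ o ∈ S, f o = (if ebar ∈ S then f ebar else 0) + (if h1 ∈ S then f h1 else 0)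
      + (if e2 ∈ S then f e2 else 0) + ((if e (g+1) ∈ S then f (e (g+1)) else 0)
      + ∑ i ∈ (Icc 1 g).filter (fun i => e i ∈ S), f (e i)) := by
  have hx : ebar ∉ (Icc 1 (g+1)).image e := by
    simp only [mem_image, not_exists]
    rintro i ⟨hi, hie⟩
    exact (hd1 i hi).1 hie
  have hy : h1 ∉ (Icc 1 (g+1)).image e := by
    simp only [mem_image, not_exists]
    rintro i ⟨hi, hie⟩
    exact (hd1 i hi).2.1 hie
  have hz : e2 ∉ (Icc 1 (g+1)).image e := by
    simp only [mem_image, not_exists]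
    rintro i ⟨hi, hie⟩
    exact (hd1 i hi).2.2 hie
  rw [aux_sum_three S _ ebar h1 e2 hS hx hy hz hd2 hd3 hd4 f]
  congr 1
  have hsub : S.filter (fun o => o ∈ (Icc 1 (g+1)).image e) ⊆ (Icc 1 (g+1)).image e :=
    fun o ho => (Finset.mem_filter.mp ho).2
  rw [aux_sum_image e (Icc 1 (g+1)) (by rwa [coe_Icc]) _ hsub f]
  have heq : (Icc 1 (g+1)).filter
      (fun i => e i ∈ S.filter (fun o => o ∈ (Icc 1 (g+1)).image e))
      = (Icc 1 (g+1)).filter (fun i => e i ∈ S) := by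
    apply Finset.filter_congr
    intro i hi
    simp only [Finset.mem_filter]
    exact ⟨fun h => h.1, fun h => ⟨h, Finset.mem_image.mpr ⟨i, hi, rfl⟩⟩⟩
  rw [heq, aux_split_top]

/-- the combinatorial core of Lemma 3.5: with the action
constraints, the only possibility is that `e (g+1)` is replaced by the
hyperbolic orbit `h1` of smaller action. -/
theorem splitting_action_forces_hyperbolic (g : ℕ) (hg : 1 ≤ g)
    (ε : ℤ) (hε : ε = 1 ∨ ε = -1)
    (u v : ℕ → (ℕ → ℤ) × (ℕ → ℤ))
    (hu : ∀ i, u i = (Pi.single i 1, 0))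
    (hv : ∀ i, v i = (0, Pi.single i 1))
    (w : (ℕ → ℤ) × (ℕ → ℤ))
    (hw : w = -∑ i ∈ Icc 1 g, u i)
    (O : Type) [DecidableEq O]
    (e : ℕ → O) (ebar h1 e2 : O)
    (he : Set.InjOn e (Set.Icc 1 (g+1)))
    (hd1 : ∀ i ∈ Icc 1 (g+1), e i ≠ ebar ∧ e i ≠ h1 ∧ e i ≠ e2)
    (hd2 : ebar ≠ h1) (hd3 : ebar ≠ e2) (hd4 : h1 ≠ e2)
    (cl : O → (ℕ → ℤ) × (ℕ → ℤ))
    (hcle : ∀ i ∈ Icc 1 g, cl (e i) = u i)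
    (hcltop : cl (e (g+1)) = w)
    (hclh1 : cl h1 = w)
    (hclbar : cl ebar = ε • v 1)
    (hcle2 : cl e2 = w - ε • v 1)
    (A : O → ℝ) (hApos : ∀ o, 0 < A o) (a : ℝ)
    (hAe : ∀ i ∈ Icc 1 (g+1), A (e i) = a)
    (hAh1 : A h1 < a) (hAbar : a < A ebar) (hAe2 : a < A e2)
    (Sp Sm : Finset O)
    (hSp : Sp ⊆ (Icc 1 (g+1)).image e)
    (hSm : Sm ⊆ insert ebar (insert h1 (insert e2 ((Icc 1 (g+1)).image e))))
    (hSpne : Sp.Nonempty) (hSmne : Sm.Nonempty)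
    (hcl : ∑ o ∈ Sp, cl o = ∑ o ∈ Sm, cl o)
    (hA : ∑ o ∈ Sm, A o < ∑ o ∈ Sp, A o) :
    e (g+1) ∈ Sp ∧ Sm = insert h1 (Sp.erase (e (g+1))) := by
  classical
  have hg1' : (1:ℕ) ∈ Icc 1 (g+1) := by simp only [mem_Icc]; omega
  have hgtop : (g+1) ∈ Icc 1 (g+1) := by simp only [mem_Icc]; omega
  have ha : 0 < a := by
    have := hApos (e 1); rwa [hAe 1 hg1'] at this
  -- coordinates of w
  have hwfst : ∀ j ∈ Icc 1 g, w.1 j = -1 := by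
    intro j hj
    rw [hw]
    simp only [Prod.fst_neg, Prod.fst_sum, Pi.neg_apply, Finset.sum_apply, hu]
    rw [Finset.sum_congr rfl (fun i _ => Pi.single_apply i (1:ℤ) j), Finset.sum_ite_eq]
    simp [hj]
  have hwsnd : ∀ j, w.2 j = 0 := by
    intro j
    rw [hw]
    simp [hu, Prod.snd_neg, Prod.snd_sum]
  -- first-coordinate scalar equations
  have hfst : ∀ j ∈ Icc 1 g,
      (if e (g+1) ∈ Sp then (-1:ℤ) else 0) + (if e j ∈ Sp then (1:ℤ) else 0)
      = (if h1 ∈ Sm then (-1:ℤ) else 0) + (if e2 ∈ Sm then (-1:ℤ) else 0)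
        + ((if e (g+1) ∈ Sm then (-1:ℤ) else 0) + (if e j ∈ Sm then (1:ℤ) else 0)) := by
    intro j hj
    have H : ∑ o ∈ Sp, (cl o).1 j = ∑ o ∈ Sm, (cl o).1 j := by
      have := congrArg (fun x => x.1 j) hcl
      simpa [Prod.fst_sum, Finset.sum_apply] using this
    rw [sum_Sp g e he Sp hSp (fun o => (cl o).1 j),
      sum_Sm g e ebar h1 e2 he hd1 hd2 hd3 hd4 Sm hSm (fun o => (cl o).1 j)] at H
    have hval : ∀ (S : Finset O), ∑ i ∈ (Icc 1 g).filter (fun i => e i ∈ S), (cl (e i)).1 j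
        = if e j ∈ S then (1:ℤ) else 0 := by
      intro S
      have hc : ∀ i ∈ (Icc 1 g).filter (fun i => e i ∈ S),
          (cl (e i)).1 j = if j = i then (1:ℤ) else 0 := by
        intro i hi
        rw [hcle i (Finset.mem_filter.mp hi).1, hu]
        exact Pi.single_apply i (1:ℤ) j
      rw [Finset.sum_congr rfl hc, Finset.sum_ite_eq]
      simp [Finset.mem_filter, hj]
    rw [hval Sp, hval Sm, hcltop, hclh1, hclbar, hcle2] at H
    have h1v : (ε • v 1).1 j = 0 := by simp [hv]
    have h2v : (w - ε • v 1).1 j = -1 := by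
      have : (w - ε • v 1).1 j = w.1 j - (ε • v 1).1 j := by simp
      rw [this, h1v, hwfst j hj]; ring
    rw [hwfst j hj] at H
    rw [h1v, h2v] at H
    simpa using H
  -- second-coordinate equation
  have hsnd : (if ebar ∈ Sm then ε else 0) + (if e2 ∈ Sm then -ε else 0) = 0 := by
    have H : ∑ o ∈ Sp, (cl o).2 1 = ∑ o ∈ Sm, (cl o).2 1 := by
      have := congrArg (fun x => x.2 1) hcl
      simpa [Prod.snd_sum, Finset.sum_apply] using this
    rw [sum_Sp g e he Sp hSp (fun o => (cl o).2 1),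
      sum_Sm g e ebar h1 e2 he hd1 hd2 hd3 hd4 Sm hSm (fun o => (cl o).2 1)] at H
    have hval : ∀ (S : Finset O),
        ∑ i ∈ (Icc 1 g).filter (fun i => e i ∈ S), (cl (e i)).2 1 = 0 := by
      intro S
      refine Finset.sum_eq_zero ?_
      intro i hi
      rw [hcle i (Finset.mem_filter.mp hi).1, hu]
      rfl
    rw [hval Sp, hval Sm, hcltop, hclh1, hclbar, hcle2] at H
    have h1v : (ε • v 1).2 1 = ε := by simp [hv]
    have h2v : (w - ε • v 1).2 1 = -ε := by
      have h3 : (w - ε • v 1).2 1 = w.2 1 - (ε • v 1).2 1 := by simp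
      rw [h3, h1v, hwsnd]; ring
    rw [hwsnd, h1v, h2v] at H
    simpa using H.symm
  have hBE : (ebar ∈ Sm) ↔ (e2 ∈ Sm) := by
    constructor <;> intro hx <;> by_contra hy <;> simp [hx, hy] at hsnd <;>
      rcases hε with rfl | rfl <;> omega
  -- action inequality
  have hAct : (if ebar ∈ Sm then A ebar else 0) + (if h1 ∈ Sm then A h1 else 0)
      + (if e2 ∈ Sm then A e2 else 0)
      + ((if e (g+1) ∈ Sm then a else 0)
        + (((Icc 1 g).filter (fun i => e i ∈ Sm)).card : ℝ) * a)
      < (if e (g+1) ∈ Sp then a else 0)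
        + (((Icc 1 g).filter (fun i => e i ∈ Sp)).card : ℝ) * a := by
    have hval : ∀ (S : Finset O), ∑ i ∈ (Icc 1 g).filter (fun i => e i ∈ S), A (e i)
        = (((Icc 1 g).filter (fun i => e i ∈ S)).card : ℝ) * a := by
      intro S
      have hc : ∀ i ∈ (Icc 1 g).filter (fun i => e i ∈ S), A (e i) = a := by
        intro i hi
        apply hAe
        have h4 := (Finset.mem_filter.mp hi).1
        simp only [mem_Icc] at h4 ⊢
        omega
      rw [Finset.sum_congr rfl hc, Finset.sum_const, nsmul_eq_mul]
    have H := hA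
    rw [sum_Sp g e he Sp hSp A, sum_Sm g e ebar h1 e2 he hd1 hd2 hd3 hd4 Sm hSm A,
      hval Sp, hval Sm, hAe (g+1) hgtop] at H
    exact H
  have master : ∀ j ∈ Icc 1 g,
      (if e j ∈ Sp then (1:ℤ) else 0) - (if e j ∈ Sm then 1 else 0)
      = (if e (g+1) ∈ Sp then 1 else 0) - (if e (g+1) ∈ Sm then 1 else 0)
        - (if h1 ∈ Sm then 1 else 0) - (if e2 ∈ Sm then 1 else 0) := by
    intro j hj
    have h := hfst j hj
    split_ifs at h ⊢ <;> omega
  have hg1g : (1:ℕ) ∈ Icc 1 g := by simp only [mem_Icc]; omega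
  by_cases hE : e2 ∈ Sm
  · exfalso
    have hB : ebar ∈ Sm := hBE.mpr hE
    have hsub : (Icc 1 g).filter (fun i => e i ∈ Sp) ⊆ (Icc 1 g).filter (fun i => e i ∈ Sm) := by
      intro j hj'
      obtain ⟨hj, hjs⟩ := Finset.mem_filter.mp hj'
      refine Finset.mem_filter.mpr ⟨hj, ?_⟩
      by_contra hns
      have h := master j hj
      rw [if_pos hjs, if_neg hns, if_pos hE] at h
      split_ifs at h <;> omega
    have hcard : ((((Icc 1 g).filter (fun i => e i ∈ Sp)).card : ℝ))
        ≤ (((Icc 1 g).filter (fun i => e i ∈ Sm)).card : ℝ) := by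
      exact_mod_cast Finset.card_le_card hsub
    have hmul := mul_le_mul_of_nonneg_right hcard (le_of_lt ha)
    have b1 : (0:ℝ) ≤ (if h1 ∈ Sm then A h1 else 0) := by
      split_ifs
      exacts [le_of_lt (hApos h1), le_refl 0]
    have b2 : (0:ℝ) ≤ (if e (g+1) ∈ Sm then a else 0) := by
      split_ifs
      exacts [le_of_lt ha, le_refl 0]
    have b3 : (if e (g+1) ∈ Sp then a else 0) ≤ a := by
      split_ifs
      exacts [le_refl a, le_of_lt ha]
    rw [if_pos hB, if_pos hE] at hAct
    linarith
  · have hB : ebar ∉ Sm := fun hx => hE (hBE.mp hx)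
    rw [if_neg hB, if_neg hE] at hAct
    by_cases hP : e (g+1) ∈ Sp
    · rw [if_pos hP] at hAct
      by_cases hM : e (g+1) ∈ Sm
      · rw [if_pos hM] at hAct
        exfalso
        by_cases hH : h1 ∈ Sm
        · have hkey : ∀ j ∈ Icc 1 g, e j ∉ Sp ∧ e j ∈ Sm := by
            intro j hj
            have h := master j hj
            rw [if_pos hP, if_pos hM, if_pos hH, if_neg hE] at h
            constructor
            · intro hx
              rw [if_pos hx] at h
              split_ifs at h <;> omega
            · by_contra hy
              rw [if_neg hy] at h
              split_ifs at h <;> omega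
          have hTp0 : (Icc 1 g).filter (fun i => e i ∈ Sp) = ∅ := by
            refine Finset.filter_eq_empty_iff.mpr ?_
            intro i hi
            exact (hkey i hi).1
          have hTm1 : (Icc 1 g).filter (fun i => e i ∈ Sm) = Icc 1 g := by
            refine Finset.filter_eq_self.mpr ?_
            intro i hi
            exact (hkey i hi).2
          rw [if_pos hH, hTp0, hTm1] at hAct
          simp only [Finset.card_empty, Nat.card_Icc, Nat.add_sub_cancel, Nat.cast_zero] at hAct
          have hga : a ≤ (g:ℝ) * a := by
            have h1g : (1:ℝ) ≤ (g:ℝ) := by exact_mod_cast hg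
            nlinarith
          have := hApos h1
          linarith
        · have hkey : ∀ j ∈ Icc 1 g, (e j ∈ Sp ↔ e j ∈ Sm) := by
            intro j hj
            have h := master j hj
            rw [if_pos hP, if_pos hM, if_neg hH, if_neg hE] at h
            constructor <;> intro hx <;> by_contra hy <;>
              rw [if_pos hx, if_neg hy] at h <;> norm_num at h
          have hT : (Icc 1 g).filter (fun i => e i ∈ Sp)
              = (Icc 1 g).filter (fun i => e i ∈ Sm) :=
            Finset.filter_congr (fun j hj => hkey j hj)
          rw [if_neg hH, hT] at hAct
          linarith
      · rw [if_neg hM] at hAct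
        by_cases hH : h1 ∈ Sm
        · rw [if_pos hH] at hAct
          have hkey : ∀ j ∈ Icc 1 g, (e j ∈ Sp ↔ e j ∈ Sm) := by
            intro j hj
            have h := master j hj
            rw [if_pos hP, if_neg hM, if_pos hH, if_neg hE] at h
            constructor <;> intro hx <;> by_contra hy <;>
              rw [if_pos hx, if_neg hy] at h <;> norm_num at h
          refine ⟨hP, ?_⟩
          ext o
          simp only [Finset.mem_insert, Finset.mem_erase]
          constructor
          · intro ho
            have hmem := hSm ho
            simp only [Finset.mem_insert, Finset.mem_image] at hmem
            rcases hmem with rfl | rfl | rfl | ⟨i, hi, rfl⟩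
            · exact absurd ho hB
            · exact Or.inl rfl
            · exact absurd ho hE
            · by_cases hig : i = g + 1
              · subst hig
                exact absurd ho hM
              · have hbounds := Finset.mem_Icc.mp hi
                have hi' : i ∈ Icc 1 g := Finset.mem_Icc.mpr (by omega)
                refine Or.inr ⟨?_, (hkey i hi').mpr ho⟩
                intro hcontra
                exact hig (he (Set.mem_Icc.mpr (by omega)) (Set.mem_Icc.mpr (by omega)) hcontra)
          · rintro (rfl | ⟨hne, hop⟩)
            · exact hH
            · obtain ⟨i, hi, rfl⟩ := Finset.mem_image.mp (hSp hop)
              by_cases hig : i = g + 1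
              · subst hig
                exact absurd rfl hne
              · have hbounds := Finset.mem_Icc.mp hi
                have hi' : i ∈ Icc 1 g := Finset.mem_Icc.mpr (by omega)
                exact (hkey i hi').mp hop
        · exfalso
          have hkey : ∀ j ∈ Icc 1 g, e j ∉ Sm := by
            intro j hj
            have h := master j hj
            rw [if_pos hP, if_neg hM, if_neg hH, if_neg hE] at h
            intro hx
            rw [if_pos hx] at h
            split_ifs at h <;> omega
          obtain ⟨o, ho⟩ := hSmne
          have hmem := hSm ho
          simp only [Finset.mem_insert, Finset.mem_image] at hmem
          rcases hmem with rfl | rfl | rfl | ⟨i, hi, rfl⟩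
          · exact hB ho
          · exact hH ho
          · exact hE ho
          · by_cases hig : i = g + 1
            · subst hig
              exact hM ho
            · have hbounds := Finset.mem_Icc.mp hi
              exact hkey i (Finset.mem_Icc.mpr (by omega)) ho
    · rw [if_neg hP] at hAct
      exfalso
      by_cases hM : e (g+1) ∈ Sm
      · by_cases hH : h1 ∈ Sm
        · have h := master 1 hg1g
          rw [if_neg hP, if_pos hM, if_pos hH, if_neg hE] at h
          split_ifs at h <;> omega
        · have hkey : ∀ j ∈ Icc 1 g, e j ∉ Sp := by
            intro j hj
            have h := master j hj
            rw [if_neg hP, if_pos hM, if_neg hH, if_neg hE] at h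
            intro hx
            rw [if_pos hx] at h
            split_ifs at h <;> omega
          obtain ⟨o, ho⟩ := hSpne
          obtain ⟨i, hi, rfl⟩ := Finset.mem_image.mp (hSp ho)
          by_cases hig : i = g + 1
          · subst hig
            exact hP ho
          · have hbounds := Finset.mem_Icc.mp hi
            exact hkey i (Finset.mem_Icc.mpr (by omega)) ho
      · by_cases hH : h1 ∈ Sm
        · have hkey : ∀ j ∈ Icc 1 g, e j ∉ Sp := by
            intro j hj
            have h := master j hj
            rw [if_neg hP, if_neg hM, if_pos hH, if_neg hE] at h
            intro hx
            rw [if_pos hx] at h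
            split_ifs at h <;> omega
          obtain ⟨o, ho⟩ := hSpne
          obtain ⟨i, hi, rfl⟩ := Finset.mem_image.mp (hSp ho)
          by_cases hig : i = g + 1
          · subst hig
            exact hP ho
          · have hbounds := Finset.mem_Icc.mp hi
            exact hkey i (Finset.mem_Icc.mpr (by omega)) ho
        · have hkey : ∀ j ∈ Icc 1 g, (e j ∈ Sp ↔ e j ∈ Sm) := by
            intro j hj
            have h := master j hj
            rw [if_neg hP, if_neg hM, if_neg hH, if_neg hE] at h
            constructor <;> intro hx <;> by_contra hy <;>
              rw [if_pos hx, if_neg hy] at h <;> norm_num at h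
          have hT : (Icc 1 g).filter (fun i => e i ∈ Sp)
              = (Icc 1 g).filter (fun i => e i ∈ Sm) :=
            Finset.filter_congr (fun j hj => hkey j hj)
          rw [if_neg hM, if_neg hH, hT] at hAct
          linarith
end

section
/- Let g ≥ 1 and fix a sign ε ∈ {+1, −1}. Let O consist of pairwise distinct symbols e_1, …, e_g, e_{g+1}, ē_1, h¹, e² with class map cl(e_i) = u_i for 1 ≤ i ≤ g, cl(e_{g+1}) = cl(h¹) = w, cl(ē_1) = ε·v_1, and cl(e²) = w − ε·v_1, and let A : O → ℝ_{>0} be an action map satisfying A(e_1) = ⋯ = A(e_g) = A(e_{g+1}) = a, A(h¹) < a, and a < A(ē_1), a < A(e²). Suppose S⁺ ⊆ {e_1, …, e_g, h¹} is nonempty, S⁻ ⊆ {e_1, …, e_{g+1}, ē_1, h¹, e²}, cl(S⁺) = cl(S⁻), and A(S⁻) < A(S⁺). Then S⁻ = ∅ and S⁺ = {e_1, …, e_g, h¹}. -/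
open Finset

/-- the combinatorial core of Lemma 3.7: a level with positive
ends among `e 1, …, e g, h1`, equal total class, and decreasing total action
must have no negative ends and all of `e 1, …, e g, h1` as positive ends. -/
theorem splitting_top_level_has_no_negative_ends (g : ℕ) (hg : 1 ≤ g)
    (ε : ℤ) (hε : ε = 1 ∨ ε = -1)
    (u v : ℕ → (ℕ → ℤ) × (ℕ → ℤ))
    (hu : ∀ i, u i = (Pi.single i 1, 0))
    (hv : ∀ i, v i = (0, Pi.single i 1))
    (w : (ℕ → ℤ) × (ℕ → ℤ))
    (hw : w = -∑ i ∈ Icc 1 g, u i)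
    (O : Type) [DecidableEq O]
    (e : ℕ → O) (ebar h1 e2 : O)
    (he : Set.InjOn e (Set.Icc 1 (g+1)))
    (hd1 : ∀ i ∈ Icc 1 (g+1), e i ≠ ebar ∧ e i ≠ h1 ∧ e i ≠ e2)
    (hd2 : ebar ≠ h1) (hd3 : ebar ≠ e2) (hd4 : h1 ≠ e2)
    (cl : O → (ℕ → ℤ) × (ℕ → ℤ))
    (hcle : ∀ i ∈ Icc 1 g, cl (e i) = u i)
    (hcltop : cl (e (g+1)) = w)
    (hclh1 : cl h1 = w)
    (hclbar : cl ebar = ε • v 1)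
    (hcle2 : cl e2 = w - ε • v 1)
    (A : O → ℝ) (hApos : ∀ o, 0 < A o) (a : ℝ)
    (hAe : ∀ i ∈ Icc 1 (g+1), A (e i) = a)
    (hAh1 : A h1 < a) (hAbar : a < A ebar) (hAe2 : a < A e2)
    (Sp Sm : Finset O)
    (hSp : Sp ⊆ insert h1 ((Icc 1 g).image e))
    (hSm : Sm ⊆ insert ebar (insert h1 (insert e2 ((Icc 1 (g+1)).image e))))
    (hSpne : Sp.Nonempty)
    (hcl : ∑ o ∈ Sp, cl o = ∑ o ∈ Sm, cl o)
    (hA : ∑ o ∈ Sm, A o < ∑ o ∈ Sp, A o) :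
    Sm = ∅ ∧ Sp = insert h1 ((Icc 1 g).image e) := by

  classical
  have hmem' : ∀ i ∈ Icc 1 g, i ∈ Icc 1 (g+1) := by
    intro i hi; simp only [Finset.mem_Icc] at *; omega
  have h11 : (1:ℕ) ∈ Icc 1 (g+1) := by simp
  have h1g : (1:ℕ) ∈ Icc 1 g := by simp [hg]
  have ha : 0 < a := by have := hApos (e 1); rwa [hAe 1 h11] at this
  have hga : a ≤ (g:ℝ) * a := le_mul_of_one_le_left ha.le (by exact_mod_cast hg)
  set Ip : Finset ℕ := (Icc 1 g).filter (fun i => e i ∈ Sp) with hIpdef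
  set Im : Finset ℕ := (Icc 1 g).filter (fun i => e i ∈ Sm) with hImdef
  have hIpsub : Ip ⊆ Icc 1 g := Finset.filter_subset _ _
  have hImsub : Im ⊆ Icc 1 g := Finset.filter_subset _ _
  have hinj : ∀ x ∈ Icc 1 (g+1), ∀ y ∈ Icc 1 (g+1), e x = e y → x = y := by
    intro x hx y hy hxy
    simp only [Finset.mem_Icc] at hx hy
    exact he ⟨hx.1, hx.2⟩ ⟨hy.1, hy.2⟩ hxy
  have hinj' : ∀ x ∈ Icc 1 g, ∀ y ∈ Icc 1 g, e x = e y → x = y := by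
    intro x hx y hy hxy
    exact hinj x (hmem' x hx) y (hmem' y hy) hxy
  have hh1im : h1 ∉ (Icc 1 g).image e := by
    intro hmem
    obtain ⟨i, hi, hie⟩ := Finset.mem_image.mp hmem
    exact (hd1 i (hmem' i hi)).2.1 hie
  have he2im : e2 ∉ (Icc 1 (g+1)).image e := by
    intro hmem
    obtain ⟨i, hi, hie⟩ := Finset.mem_image.mp hmem
    exact (hd1 i hi).2.2 hie
  have hh1im' : h1 ∉ insert e2 ((Icc 1 (g+1)).image e) := by
    intro hmem
    rcases Finset.mem_insert.mp hmem with h | hmem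
    · exact hd4 h
    · obtain ⟨i, hi, hie⟩ := Finset.mem_image.mp hmem
      exact (hd1 i hi).2.1 hie
  have hebarim : ebar ∉ insert h1 (insert e2 ((Icc 1 (g+1)).image e)) := by
    intro hmem
    rcases Finset.mem_insert.mp hmem with h | hmem
    · exact hd2 h
    rcases Finset.mem_insert.mp hmem with h | hmem
    · exact hd3 h
    · obtain ⟨i, hi, hie⟩ := Finset.mem_image.mp hmem
      exact (hd1 i hi).1 hie
  have hIccsucc : Icc 1 (g+1) = insert (g+1) (Icc 1 g) := by
    ext x; simp only [Finset.mem_Icc, Finset.mem_insert]; omega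
  have hg1Icc : (g+1 : ℕ) ∉ Icc 1 g := by simp
  -- decomposition of sums over Sp
  have keyP : ∀ {M : Type} [AddCommMonoid M] (f : O → M),
      ∑ o ∈ Sp, f o = (if h1 ∈ Sp then f h1 else 0) + ∑ i ∈ Ip, f (e i) := by
    intro M _ f
    calc ∑ o ∈ Sp, f o = ∑ o ∈ (insert h1 ((Icc 1 g).image e)) ∩ Sp, f o := by
          rw [Finset.inter_eq_right.mpr hSp]
      _ = ∑ o ∈ insert h1 ((Icc 1 g).image e), if o ∈ Sp then f o else 0 :=
          (Finset.sum_ite_mem _ _ _).symm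
      _ = (if h1 ∈ Sp then f h1 else 0)
            + ∑ o ∈ (Icc 1 g).image e, if o ∈ Sp then f o else 0 := by
          rw [Finset.sum_insert hh1im]
      _ = (if h1 ∈ Sp then f h1 else 0)
            + ∑ i ∈ Icc 1 g, if e i ∈ Sp then f (e i) else 0 := by
          rw [Finset.sum_image hinj']
      _ = (if h1 ∈ Sp then f h1 else 0) + ∑ i ∈ Ip, f (e i) := by
          rw [hIpdef, Finset.sum_filter]
  -- decomposition of sums over Sm
  have keyM : ∀ {M : Type} [AddCommMonoid M] (f : O → M),
      ∑ o ∈ Sm, f o = (if ebar ∈ Sm then f ebar else 0)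
        + ((if h1 ∈ Sm then f h1 else 0)
        + ((if e2 ∈ Sm then f e2 else 0)
        + ((if e (g+1) ∈ Sm then f (e (g+1)) else 0) + ∑ i ∈ Im, f (e i)))) := by
    intro M _ f
    calc ∑ o ∈ Sm, f o
        = ∑ o ∈ (insert ebar (insert h1 (insert e2 ((Icc 1 (g+1)).image e)))) ∩ Sm, f o := by
          rw [Finset.inter_eq_right.mpr hSm]
      _ = ∑ o ∈ insert ebar (insert h1 (insert e2 ((Icc 1 (g+1)).image e))),
            if o ∈ Sm then f o else 0 := (Finset.sum_ite_mem _ _ _).symm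
      _ = (if ebar ∈ Sm then f ebar else 0)
            + ((if h1 ∈ Sm then f h1 else 0)
            + ((if e2 ∈ Sm then f e2 else 0)
            + ∑ o ∈ (Icc 1 (g+1)).image e, if o ∈ Sm then f o else 0)) := by
          rw [Finset.sum_insert hebarim, Finset.sum_insert hh1im', Finset.sum_insert he2im]
      _ = (if ebar ∈ Sm then f ebar else 0)
            + ((if h1 ∈ Sm then f h1 else 0)
            + ((if e2 ∈ Sm then f e2 else 0)
            + ∑ i ∈ Icc 1 (g+1), if e i ∈ Sm then f (e i) else 0)) := by
          rw [Finset.sum_image hinj]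
      _ = (if ebar ∈ Sm then f ebar else 0)
            + ((if h1 ∈ Sm then f h1 else 0)
            + ((if e2 ∈ Sm then f e2 else 0)
            + ((if e (g+1) ∈ Sm then f (e (g+1)) else 0)
            + ∑ i ∈ Icc 1 g, if e i ∈ Sm then f (e i) else 0))) := by
          rw [hIccsucc, Finset.sum_insert hg1Icc]
      _ = _ := by rw [hImdef, Finset.sum_filter]
  -- scalar class values
  have hw1 : ∀ j ∈ Icc 1 g, w.1 j = -1 := by
    intro j hj
    have hterm : ∀ i ∈ Icc 1 g, (u i).1 j = if j = i then (1:ℤ) else 0 := by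
      intro i _
      rw [hu i]
      exact Pi.single_apply i 1 j
    rw [hw, Prod.fst_neg, Prod.fst_sum, Pi.neg_apply, Finset.sum_apply,
      Finset.sum_congr rfl hterm, Finset.sum_ite_eq (Icc 1 g) j (fun _ => (1:ℤ)),
      if_pos hj]
  have hw2 : w.2 = 0 := by
    have hterm : ∀ i ∈ Icc 1 g, (u i).2 = 0 := by intro i _; rw [hu i]
    rw [hw, Prod.snd_neg, Prod.snd_sum, Finset.sum_congr rfl hterm,
      Finset.sum_const, smul_zero, neg_zero]
  have hclE1 : ∀ (s : Finset ℕ), s ⊆ Icc 1 g → ∀ j,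
      ∑ i ∈ s, (cl (e i)).1 j = if j ∈ s then 1 else 0 := by
    intro s hs j
    have hterm : ∀ i ∈ s, (cl (e i)).1 j = if j = i then (1:ℤ) else 0 := by
      intro i hi
      rw [hcle i (hs hi), hu i]
      exact Pi.single_apply i 1 j
    rw [Finset.sum_congr rfl hterm]
    exact Finset.sum_ite_eq s j (fun _ => (1:ℤ))
  have hclE2 : ∀ (s : Finset ℕ), s ⊆ Icc 1 g → ∑ i ∈ s, (cl (e i)).2 1 = 0 := by
    intro s hs
    apply Finset.sum_eq_zero
    intro i hi
    rw [hcle i (hs hi), hu i]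
    rfl
  have hbar2 : (cl ebar).2 1 = ε := by
    rw [hclbar, Prod.smul_snd, hv 1, Pi.smul_apply]
    simp [Pi.single_apply]
  have he22 : (cl e2).2 1 = -ε := by
    have : (cl e2).2 = w.2 - (ε • v 1).2 := by rw [hcle2]; rfl
    rw [this, hw2, Prod.smul_snd, hv 1]
    simp [Pi.single_apply]
  have hbar1 : ∀ j, (cl ebar).1 j = 0 := by
    intro j
    rw [hclbar, Prod.smul_fst, hv 1]
    simp
  have he21 : ∀ j ∈ Icc 1 g, (cl e2).1 j = -1 := by
    intro j hj
    have : (cl e2).1 = w.1 - (ε • v 1).1 := by rw [hcle2]; rfl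
    rw [this, Pi.sub_apply, hw1 j hj, Prod.smul_fst, hv 1]
    simp
  -- first-coordinate equation
  have E1 : ∀ j ∈ Icc 1 g,
      (if h1 ∈ Sp then (-1:ℤ) else 0) + (if j ∈ Ip then (1:ℤ) else 0) =
      (if ebar ∈ Sm then (0:ℤ) else 0)
        + ((if h1 ∈ Sm then (-1:ℤ) else 0)
        + ((if e2 ∈ Sm then (-1:ℤ) else 0)
        + ((if e (g+1) ∈ Sm then (-1:ℤ) else 0) + (if j ∈ Im then (1:ℤ) else 0)))) := by
    intro j hj
    have h := congrArg (fun x => x.1 j) hcl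
    simp only [Prod.fst_sum, Finset.sum_apply] at h
    rw [keyP (fun o => (cl o).1 j), keyM (fun o => (cl o).1 j)] at h
    rw [hclE1 Ip hIpsub j, hclE1 Im hImsub j] at h
    rw [hclh1, hcltop, hw1 j hj, hbar1 j, he21 j hj] at h
    exact h
  -- second-coordinate equation forces ebar ∈ Sm ↔ e2 ∈ Sm
  have hbb : (ebar ∈ Sm) ↔ (e2 ∈ Sm) := by
    have h := congrArg (fun x => x.2 1) hcl
    simp only [Prod.snd_sum, Finset.sum_apply] at h
    rw [keyP (fun o => (cl o).2 1), keyM (fun o => (cl o).2 1)] at h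
    rw [hclE2 Ip hIpsub, hclE2 Im hImsub] at h
    rw [hclh1, hcltop, hw2, hbar2, he22] at h
    simp only [Pi.zero_apply] at h
    rcases hε with h' | h' <;> subst h' <;>
      constructor <;> intro hmm <;> by_contra hnot <;>
      simp only [hmm, hnot, if_true, if_false] at h <;> split_ifs at h <;> omega
  -- action inequality
  have EA : (if ebar ∈ Sm then A ebar else 0)
        + ((if h1 ∈ Sm then A h1 else 0)
        + ((if e2 ∈ Sm then A e2 else 0)
        + ((if e (g+1) ∈ Sm then A (e (g+1)) else 0) + (Im.card : ℝ) * a)))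
      < (if h1 ∈ Sp then A h1 else 0) + (Ip.card : ℝ) * a := by
    have hsumA : ∀ (s : Finset ℕ), s ⊆ Icc 1 g → ∑ i ∈ s, A (e i) = (s.card : ℝ) * a := by
      intro s hs
      rw [Finset.sum_congr rfl (fun i hi => hAe i (hmem' i (hs hi))),
        Finset.sum_const, nsmul_eq_mul]
    rw [keyP A, keyM A, hsumA Ip hIpsub, hsumA Im hImsub] at hA
    exact hA
  have hAg1 : A (e (g+1)) = a := hAe (g+1) (by simp)
  -- helper: equal index sets
  have hIpIm : (∀ j ∈ Icc 1 g, (j ∈ Ip ↔ j ∈ Im)) → Ip = Im := by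
    intro h
    ext j
    by_cases hj : j ∈ Icc 1 g
    · exact h j hj
    · constructor
      · intro hmm; exact absurd (hIpsub hmm) hj
      · intro hmm; exact absurd (hImsub hmm) hj
  by_cases hp : h1 ∈ Sp
  · -- h1 ∈ Sp
    have contra : (h1 ∈ Sm ∨ e (g+1) ∈ Sm ∨ e2 ∈ Sm) → Ip ⊆ Im := by
      intro hk j hj
      have hjI : j ∈ Icc 1 g := hIpsub hj
      have h := E1 j hjI
      by_contra hnot
      simp only [hp, hj, hnot, if_true, if_false, ite_self] at h
      rcases hk with hm | hm | hm <;> simp only [hm, if_true] at h <;>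
        split_ifs at h <;> omega
    have cardle : Ip ⊆ Im → (Ip.card : ℝ) * a ≤ (Im.card : ℝ) * a := by
      intro hsub
      have h1' := Finset.card_le_card hsub
      have h2' : (Ip.card : ℝ) ≤ (Im.card : ℝ) := by exact_mod_cast h1'
      nlinarith
    by_cases hm1 : h1 ∈ Sm <;> by_cases hm2 : e (g+1) ∈ Sm <;> by_cases hb2 : e2 ∈ Sm
    · -- (T,T,T)
      exfalso
      have hbbt : ebar ∈ Sm := hbb.mpr hb2
      have hcard := cardle (contra (Or.inl hm1))
      simp only [hp, hm1, hm2, hb2, hbbt, hAg1, if_true] at EA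
      have := hApos ebar; have := hApos e2; have := hApos h1
      linarith
    · -- (T,T,F)
      exfalso
      have hbbf : ebar ∉ Sm := fun h => hb2 (hbb.mp h)
      have hcard := cardle (contra (Or.inl hm1))
      simp only [hp, hm1, hm2, hb2, hbbf, hAg1, if_true, if_false] at EA
      linarith
    · -- (T,F,T)
      exfalso
      have hbbt : ebar ∈ Sm := hbb.mpr hb2
      have hcard := cardle (contra (Or.inl hm1))
      simp only [hp, hm1, hm2, hb2, hbbt, hAg1, if_true, if_false] at EA
      have := hApos ebar; have := hApos e2
      linarith
    · -- (T,F,F)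
      exfalso
      have hbbf : ebar ∉ Sm := fun h => hb2 (hbb.mp h)
      have hcard := cardle (contra (Or.inl hm1))
      simp only [hp, hm1, hm2, hb2, hbbf, hAg1, if_true, if_false] at EA
      linarith
    · -- (F,T,T)
      exfalso
      have hbbt : ebar ∈ Sm := hbb.mpr hb2
      have hcard := cardle (contra (Or.inr (Or.inl hm2)))
      simp only [hp, hm1, hm2, hb2, hbbt, hAg1, if_true, if_false] at EA
      have := hApos ebar; have := hApos e2
      linarith
    · -- (F,T,F)
      exfalso
      have hbbf : ebar ∉ Sm := fun h => hb2 (hbb.mp h)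
      have hcard := cardle (contra (Or.inr (Or.inl hm2)))
      simp only [hp, hm1, hm2, hb2, hbbf, hAg1, if_true, if_false] at EA
      linarith
    · -- (F,F,T)
      exfalso
      have hbbt : ebar ∈ Sm := hbb.mpr hb2
      have hcard := cardle (contra (Or.inr (Or.inr hb2)))
      simp only [hp, hm1, hm2, hb2, hbbt, hAg1, if_true, if_false] at EA
      have := hApos ebar; have := hApos e2
      linarith
    · -- (F,F,F) : the goal case
      have hbbf : ebar ∉ Sm := fun h => hb2 (hbb.mp h)
      have hIpfull : Ip = Icc 1 g := by
        apply Finset.Subset.antisymm hIpsub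
        intro j hj
        have h := E1 j hj
        simp only [hp, hm1, hm2, hb2, hbbf, if_true, if_false, ite_self,
          zero_add, add_zero] at h
        by_contra hnot
        simp only [hnot, if_false] at h
        split_ifs at h <;> omega
      have hImempty : Im = ∅ := by
        apply Finset.eq_empty_iff_forall_notMem.mpr
        intro j hj
        have hjI : j ∈ Icc 1 g := hImsub hj
        have hjIp : j ∈ Ip := by rw [hIpfull]; exact hjI
        have h := E1 j hjI
        simp only [hp, hm1, hm2, hb2, hbbf, hj, hjIp, if_true, if_false, ite_self,
          zero_add, add_zero] at h
        omega
      constructor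
      · apply Finset.eq_empty_iff_forall_notMem.mpr
        intro x hx
        have hxs := hSm hx
        rw [Finset.mem_insert] at hxs
        rcases hxs with rfl | hxs
        · exact hbbf hx
        rw [Finset.mem_insert] at hxs
        rcases hxs with rfl | hxs
        · exact hm1 hx
        rw [Finset.mem_insert] at hxs
        rcases hxs with rfl | hxs
        · exact hb2 hx
        obtain ⟨i, hi, rfl⟩ := Finset.mem_image.mp hxs
        rw [Finset.mem_Icc] at hi
        by_cases hig : i = g + 1
        · subst hig; exact hm2 hx
        · have hiIm : i ∈ Im := Finset.mem_filter.mpr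
            ⟨by rw [Finset.mem_Icc]; omega, hx⟩
          rw [hImempty] at hiIm
          exact absurd hiIm (Finset.notMem_empty i)
      · apply Finset.Subset.antisymm hSp
        intro x hx
        rw [Finset.mem_insert] at hx
        rcases hx with rfl | hx
        · exact hp
        · obtain ⟨i, hi, rfl⟩ := Finset.mem_image.mp hx
          have hiIp : i ∈ Ip := by rw [hIpfull]; exact hi
          exact (Finset.mem_filter.mp hiIp).2
  · -- h1 ∉ Sp : contradiction
    obtain ⟨x, hx⟩ := hSpne
    have hxs := hSp hx
    rw [Finset.mem_insert] at hxs
    rcases hxs with rfl | hxim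
    · exact absurd hx hp
    obtain ⟨i0, hi0, rfl⟩ := Finset.mem_image.mp hxim
    have hi0Ip : i0 ∈ Ip := Finset.mem_filter.mpr ⟨hi0, hx⟩
    have h0 := E1 i0 hi0
    simp only [hp, hi0Ip, if_true, if_false, ite_self] at h0
    have hm1 : h1 ∉ Sm := by
      intro hmm; simp only [hmm, if_true] at h0; split_ifs at h0 <;> omega
    have hm2 : e (g+1) ∉ Sm := by
      intro hmm; simp only [hmm, if_true] at h0; split_ifs at h0 <;> omega
    have hb2m : e2 ∉ Sm := by
      intro hmm; simp only [hmm, if_true] at h0; split_ifs at h0 <;> omega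
    have hbbm : ebar ∉ Sm := fun hmm => hb2m (hbb.mp hmm)
    have hIpImeq : Ip = Im := by
      apply hIpIm
      intro j hj
      have h := E1 j hj
      simp only [hp, hm1, hm2, hb2m, hbbm, if_false, ite_self] at h
      constructor <;> intro hmm <;> by_contra hnot <;>
        simp only [hmm, hnot, if_true, if_false] at h <;> omega
    rw [hIpImeq] at EA
    simp only [hp, hm1, hm2, hb2m, hbbm, if_false] at EA
    linarith
end

section
/- Let g ≥ 2. Let O consist of pairwise distinct symbols e_1, …, e_g, ē′_1, ẽ′_1, h̃′_1, (e²)′ with class map cl(e_i) = u_i for 1 ≤ i ≤ g, cl(ē′_1) = −v_1, cl(ẽ′_1) = cl(h̃′_1) = u_1 + (v_2 + ⋯ + v_g), and cl((e²)′) = w + (v_3 + ⋯ + v_g) (the sum v_3 + ⋯ + v_g being empty when g = 2), and let A : O → ℝ_{>0} be any action map. Then there is no pair of subsets S⁺ ⊆ {e_1, …, e_g} nonempty and S⁻ ⊆ O with cl(S⁺) = cl(S⁻) and A(S⁻) < A(S⁺). -/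
open Finset

private lemma fst_sum' {ι : Type*} (s : Finset ι) (f : ι → (ℕ → ℤ) × (ℕ → ℤ)) :
    (∑ i ∈ s, f i).1 = ∑ i ∈ s, (f i).1 :=
  map_sum (AddMonoidHom.fst (ℕ → ℤ) (ℕ → ℤ)) f s

private lemma snd_sum' {ι : Type*} (s : Finset ι) (f : ι → (ℕ → ℤ) × (ℕ → ℤ)) :
    (∑ i ∈ s, f i).2 = ∑ i ∈ s, (f i).2 :=
  map_sum (AddMonoidHom.snd (ℕ → ℤ) (ℕ → ℤ)) f s

private lemma single_sum' (s : Finset ℕ) (j : ℕ) :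
    (∑ i ∈ s, Pi.single i (1:ℤ)) j = if j ∈ s then 1 else 0 := by
  rw [Finset.sum_apply]
  by_cases h : j ∈ s
  · rw [Finset.sum_eq_single j]
    · simp [h]
    · intro k _ hkj; exact Pi.single_eq_of_ne (Ne.symm hkj) 1
    · intro hc; exact absurd h hc
  · rw [if_neg h]
    apply Finset.sum_eq_zero
    intro k hk
    exact Pi.single_eq_of_ne (by rintro rfl; exact h hk) 1

/-- the exclusion of the primed handle `(N²_1)'` in the proof of
Lemma 3.7: with the indicated homology classes there is no pair of subsets
`S⁺ ⊆ {e 1, …, e g}` nonempty, `S⁻ ⊆ O` with equal total class and strictly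
decreasing total action. -/
theorem splitting_exclusion_primed_handle (g : ℕ) (hg : 2 ≤ g)
    (u v : ℕ → (ℕ → ℤ) × (ℕ → ℤ))
    (hu : ∀ i, u i = (Pi.single i 1, 0))
    (hv : ∀ i, v i = (0, Pi.single i 1))
    (w : (ℕ → ℤ) × (ℕ → ℤ))
    (hw : w = -∑ i ∈ Icc 1 g, u i)
    (O : Type) [DecidableEq O]
    (e : ℕ → O) (ebar' etil' htil' e2' : O)
    (he : Set.InjOn e (Set.Icc 1 g))
    (hd1 : ∀ i ∈ Icc 1 g, e i ≠ ebar' ∧ e i ≠ etil' ∧ e i ≠ htil' ∧ e i ≠ e2')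
    (hd2 : ebar' ≠ etil') (hd3 : ebar' ≠ htil') (hd4 : ebar' ≠ e2')
    (hd5 : etil' ≠ htil') (hd6 : etil' ≠ e2') (hd7 : htil' ≠ e2')
    (cl : O → (ℕ → ℤ) × (ℕ → ℤ))
    (hcle : ∀ i ∈ Icc 1 g, cl (e i) = u i)
    (hclbar : cl ebar' = -v 1)
    (hcletil : cl etil' = u 1 + ∑ k ∈ Icc 2 g, v k)
    (hclhtil : cl htil' = u 1 + ∑ k ∈ Icc 2 g, v k)
    (hcle2 : cl e2' = w + ∑ k ∈ Icc 3 g, v k)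
    (A : O → ℝ) (hApos : ∀ o, 0 < A o) :
    ¬ ∃ Sp Sm : Finset O,
        Sp ⊆ (Icc 1 g).image e ∧ Sp.Nonempty ∧
        Sm ⊆ insert ebar' (insert etil' (insert htil' (insert e2' ((Icc 1 g).image e)))) ∧
        ∑ o ∈ Sp, cl o = ∑ o ∈ Sm, cl o ∧
        ∑ o ∈ Sm, A o < ∑ o ∈ Sp, A o := by
  rintro ⟨Sp, Sm, hSp, hne, hSm, hcl, hA⟩
  obtain ⟨T, hT, hTe⟩ := Finset.subset_image_iff.mp hSp
  -- sum over Sp of cl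
  have hSpcl : ∑ o ∈ Sp, cl o = ∑ i ∈ T, u i := by
    rw [← hTe, Finset.sum_image (fun a ha b hb hab => he (by simpa using hT ha)
      (by simpa using hT hb) hab)]
    exact Finset.sum_congr rfl fun i hi => hcle i (hT hi)
  -- second component of v-sums evaluated at a point
  have hvsum : ∀ (a b j : ℕ), (∑ k ∈ Icc a b, v k).2 j = if j ∈ Icc a b then 1 else 0 := by
    intro a b j
    rw [snd_sum']
    have : ∀ k ∈ Icc a b, (v k).2 = Pi.single k (1:ℤ) := fun k _ => by rw [hv]
    rw [Finset.sum_congr rfl this]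
    exact single_sum' _ _
  have hvsum1 : ∀ (a b j : ℕ), (∑ k ∈ Icc a b, v k).1 j = 0 := by
    intro a b j
    rw [fst_sum']
    rw [Finset.sum_apply]
    exact Finset.sum_eq_zero fun k _ => by simp [hv]
  have husum : ∀ (s : Finset ℕ) (j : ℕ),
      (∑ i ∈ s, u i).1 j = if j ∈ s then 1 else 0 := by
    intro s j
    rw [fst_sum']
    have : ∀ k ∈ s, (u k).1 = Pi.single k (1:ℤ) := fun k _ => by rw [hu]
    rw [Finset.sum_congr rfl this]
    exact single_sum' _ _
  have husum2 : ∀ (s : Finset ℕ), (∑ i ∈ s, u i).2 = 0 := by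
    intro s
    rw [snd_sum']
    exact Finset.sum_eq_zero fun k _ => by rw [hu]
  -- second component at coordinate 2 excludes etil', htil'
  have key2 : etil' ∉ Sm ∧ htil' ∉ Sm := by
    have hval : ∀ o ∈ Sm, (cl o).2 2 =
        (if o = etil' then 1 else 0) + (if o = htil' then 1 else 0) := by
      intro o ho
      have ho' := hSm ho
      simp only [Finset.mem_insert, Finset.mem_image] at ho'
      have h2 : (∑ k ∈ Icc 2 g, v k).2 2 = 1 := by
        rw [hvsum]; simp [hg]
      rcases ho' with rfl | rfl | rfl | rfl | ⟨i, hi, rfl⟩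
      · have : (Pi.single 1 1 : ℕ → ℤ) 2 = 0 := Pi.single_eq_of_ne (by norm_num) 1
        simp [hclbar, hv, hd2, hd3, this]
      · simp [hcletil, hu, hd5, h2]
      · simp [hclhtil, hu, hd5.symm, h2]
      · have h3 : (∑ k ∈ Icc 3 g, v k).2 2 = 0 := by
          rw [hvsum]; simp
        have hw2 : w.2 = 0 := by
          rw [hw, Prod.snd_neg, husum2, neg_zero]
        simp [hcle2, hd6.symm, hd7.symm, Prod.snd_add, hw2, h3]
      · have := hd1 i hi
        simp [hcle i hi, hu, this.2.1, this.2.2.1]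
    have hsum : ∑ o ∈ Sm, (cl o).2 2 =
        (if etil' ∈ Sm then 1 else 0) + (if htil' ∈ Sm then 1 else 0) := by
      rw [Finset.sum_congr rfl hval, Finset.sum_add_distrib]
      simp [Finset.sum_ite_eq']
    have hzero : ∑ o ∈ Sm, (cl o).2 2 = 0 := by
      have h1 : (∑ o ∈ Sm, cl o).2 = ∑ o ∈ Sm, (cl o).2 := snd_sum' _ _
      have h2 : (∑ o ∈ Sm, (cl o).2) 2 = ∑ o ∈ Sm, (cl o).2 2 := Finset.sum_apply _ _ _
      rw [← h2, ← h1, ← hcl, hSpcl, husum2]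
      rfl
    rw [hsum] at hzero
    constructor <;> by_contra h <;> simp [h] at hzero <;> split at hzero <;> omega
  -- first component at each coordinate j ∈ T forces e j ∈ Sm
  have key1 : ∀ j ∈ T, e j ∈ Sm := by
    intro j hj
    have hjI : j ∈ Icc 1 g := hT hj
    have hval : ∀ o ∈ Sm, (cl o).1 j =
        (if o = e j then 1 else 0) - (if o = e2' then 1 else 0) := by
      intro o ho
      have ho' := hSm ho
      simp only [Finset.mem_insert, Finset.mem_image] at ho'
      have hejd := hd1 j hjI
      rcases ho' with rfl | rfl | rfl | rfl | ⟨i, hi, rfl⟩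
      · simp [hclbar, hv, hejd.1.symm, hd4]
      · exact absurd ho key2.1
      · exact absurd ho key2.2
      · have hwj : w.1 j = -1 := by
          rw [hw, Prod.fst_neg, Pi.neg_apply, husum, if_pos hjI]
        have h3 : (∑ k ∈ Icc 3 g, v k).1 j = 0 := hvsum1 3 g j
        simp [hcle2, Prod.fst_add, hwj, h3, hejd.2.2.2.symm]
      · have hid := hd1 i hi
        rw [hcle i hi]
        by_cases hij : i = j
        · subst hij
          simp [hu, hid.2.2.2]
        · have hne' : e i ≠ e j := fun hc => hij (he (by simpa using hi) (by simpa using hjI) hc)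
          have : (Pi.single i 1 : ℕ → ℤ) j = 0 := Pi.single_eq_of_ne (Ne.symm hij) 1
          simp [hu, this, hne', hid.2.2.2]
    have hsum : ∑ o ∈ Sm, (cl o).1 j =
        (if e j ∈ Sm then 1 else 0) - (if e2' ∈ Sm then 1 else 0) := by
      rw [Finset.sum_congr rfl hval, Finset.sum_sub_distrib]
      simp [Finset.sum_ite_eq']
    have hone : ∑ o ∈ Sm, (cl o).1 j = 1 := by
      have h1 : (∑ o ∈ Sm, cl o).1 = ∑ o ∈ Sm, (cl o).1 := fst_sum' _ _
      have h2 : (∑ o ∈ Sm, (cl o).1) j = ∑ o ∈ Sm, (cl o).1 j := Finset.sum_apply _ _ _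
      rw [← h2, ← h1, ← hcl, hSpcl, husum, if_pos hj]
    rw [hsum] at hone
    by_contra h
    simp [h] at hone
    split at hone <;> omega
  -- hence Sp ⊆ Sm, contradicting the action inequality
  have hsub : Sp ⊆ Sm := by
    intro x hx
    rw [← hTe] at hx
    obtain ⟨j, hj, rfl⟩ := Finset.mem_image.mp hx
    exact key1 j hj
  have : ∑ o ∈ Sp, A o ≤ ∑ o ∈ Sm, A o :=
    Finset.sum_le_sum_of_subset_of_nonneg hsub (fun o _ _ => (hApos o).le)
  linarith
end
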